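/- arXiv:0706.3486 — 4 statements merged into one kernel-verified Lean document; each statement's English description precedes it below -/
import Mathlib

section
/- Let w be a cd-word of degree n with associated left sparse set S_w ⊆ [n]. Then the number of subsets T ⊆ S with both T ∈ b[I^w] and [n]\T ∈ b[I^w] equals 2^{|S|−|S_w|} if S ∈ b[I^w], and equals 0 otherwise, for any S ⊆ [n]. -/
/-- The degree of a cd-word (`false` = c, degree 1; `true` = d, degree 2). -/
def degw (w : List Bool) : ℕ := (w.map (fun b => if b then 2 else 1)).sum

/-- The left sparse set `S_w` of a cd-word: degrees of prefixes ending at each d. -/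
def Sw (w : List Bool) : Finset ℕ :=
  ((Finset.range w.length).filter (fun j => w.getD j false = true)).image
    (fun j => degw (w.take (j + 1)))

/-- `T ∈ b[I^w]`: `T` meets every interval `{i-1, i}` with `i ∈ S_w`. -/
def blocks (w : List Bool) (T : Finset ℕ) : Prop := ∀ i ∈ Sw w, i - 1 ∈ T ∨ i ∈ T

instance (w : List Bool) (T : Finset ℕ) : Decidable (blocks w T) := by
  unfold blocks; infer_instance

open Finset

lemma degw_append (l1 l2 : List Bool) : degw (l1 ++ l2) = degw l1 + degw l2 := by
  simp [degw]
lemma degw_take_le (w : List Bool) (j : ℕ) : degw (w.take j) ≤ degw w := by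
  conv_rhs => rw [← List.take_append_drop j w]
  rw [degw_append]; omega
lemma degw_take_mono (w : List Bool) {j j' : ℕ} (h : j ≤ j') :
    degw (w.take j) ≤ degw (w.take j') := by
  have : w.take j = (w.take j').take j := by rw [List.take_take, min_eq_left h]
  rw [this]; exact degw_take_le _ _
lemma degw_take_succ (w : List Bool) (j : ℕ) (hj : j < w.length)
    (hd : w.getD j false = true) :
    degw (w.take (j + 1)) = degw (w.take j) + 2 := by
  rw [List.take_succ, degw_append]
  have : w[j]? = some true := by
    rw [List.getElem?_eq_getElem hj]
    simpa [List.getD_eq_getElem?_getD, List.getElem?_eq_getElem hj] using hd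
  simp [this, degw]

lemma Sw_two_le (w : List Bool) : ∀ i ∈ Sw w, 2 ≤ i := by
  intro i hi
  simp only [Sw, mem_image, mem_filter, mem_range] at hi
  obtain ⟨j, ⟨hj, hd⟩, rfl⟩ := hi
  rw [degw_take_succ w j hj hd]; omega

lemma Sw_le_deg (w : List Bool) : ∀ i ∈ Sw w, i ≤ degw w := by
  intro i hi
  simp only [Sw, mem_image, mem_filter, mem_range] at hi
  obtain ⟨j, ⟨hj, hd⟩, rfl⟩ := hi
  exact degw_take_le _ _

lemma Sw_spacing (w : List Bool) :
    ∀ i ∈ Sw w, ∀ i' ∈ Sw w, i ≠ i' → i + 1 < i' ∨ i' + 1 < i := by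
  have key : ∀ j j' : ℕ, j < w.length → j' < w.length →
      w.getD j false = true → w.getD j' false = true → j < j' →
      degw (w.take (j + 1)) + 1 < degw (w.take (j' + 1)) := by
    intro j j' hj hj' hd hd' hlt
    have h1 := degw_take_succ w j hj hd
    have h2 := degw_take_succ w j' hj' hd'
    have h3 : degw (w.take (j + 1)) ≤ degw (w.take j') := degw_take_mono w hlt
    omega
  intro i hi i' hi' hne
  simp only [Sw, mem_image, mem_filter, mem_range] at hi hi'
  obtain ⟨j, ⟨hj, hd⟩, rfl⟩ := hi
  obtain ⟨j', ⟨hj', hd'⟩, rfl⟩ := hi'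
  rcases lt_trichotomy j j' with h | h | h
  · left; exact key j j' hj hj' hd hd' h
  · subst h; exact absurd rfl hne
  · right; exact key j' j hj' hj hd' hd h


lemma card_le_aux (A S : Finset ℕ) (h2 : ∀ i ∈ A, 2 ≤ i)
    (hsp : ∀ i ∈ A, ∀ j ∈ A, i ≠ j → i + 1 < j ∨ j + 1 < i)
    (hb : ∀ i ∈ A, i - 1 ∈ S ∨ i ∈ S) : A.card ≤ S.card := by
  apply Finset.card_le_card_of_injOn (fun i => if i - 1 ∈ S then i - 1 else i)
  · intro i hi
    by_cases h : i - 1 ∈ S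
    · simpa [h]
    · rcases hb i hi with h' | h'
      · exact absurd h' h
      · simpa [h]
  · intro i hi j hj hij
    by_contra hne
    have hs := hsp i hi j hj hne
    have h2i := h2 i hi
    have h2j := h2 j hj
    simp only at hij
    by_cases hi1 : i - 1 ∈ S <;> by_cases hj1 : j - 1 ∈ S <;>
      simp [hi1, hj1] at hij <;> omega

lemma count_main : ∀ (A : Finset ℕ), (∀ i ∈ A, 2 ≤ i) →
    (∀ i ∈ A, ∀ j ∈ A, i ≠ j → i + 1 < j ∨ j + 1 < i) →
    ∀ S : Finset ℕ,
    (S.powerset.filter fun T =>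
        (∀ i ∈ A, i - 1 ∈ T ∨ i ∈ T) ∧ (∀ i ∈ A, i - 1 ∉ T ∨ i ∉ T)).card
      = if ∀ i ∈ A, i - 1 ∈ S ∨ i ∈ S then 2 ^ (S.card - A.card) else 0 := by
  intro A
  induction A using Finset.induction_on with
  | empty =>
    intro _ _ S
    simp [Finset.card_powerset]
  | @insert a s ha ih =>
    intro h2 hsp S
    have ha2 : 2 ≤ a := h2 a (mem_insert_self _ _)
    have h2' : ∀ i ∈ s, 2 ≤ i := fun i hi => h2 i (mem_insert_of_mem hi)
    have hsp' : ∀ i ∈ s, ∀ j ∈ s, i ≠ j → i + 1 < j ∨ j + 1 < i :=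
      fun i hi j hj => hsp i (mem_insert_of_mem hi) j (mem_insert_of_mem hj)
    have hnot : ∀ i ∈ s, i - 1 ≠ a - 1 ∧ i - 1 ≠ a ∧ i ≠ a - 1 ∧ i ≠ a := by
      intro i hi
      have hia : a ≠ i := by rintro rfl; exact ha hi
      have := hsp a (mem_insert_self _ _) i (mem_insert_of_mem hi) hia
      have := h2' i hi
      omega
    by_cases hc : a - 1 ∈ S ∨ a ∈ S
    · -- main case
      set S' := S \ ({a - 1, a} : Finset ℕ) with hS'def
      have hmemS' : ∀ i ∈ s, ((i - 1 ∈ S' ↔ i - 1 ∈ S) ∧ (i ∈ S' ↔ i ∈ S)) := by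
        intro i hi
        obtain ⟨n1, n2, n3, n4⟩ := hnot i hi
        simp [hS'def, n1, n2, n3, n4]
      have key : (S.powerset.filter fun T =>
            (∀ i ∈ insert a s, i - 1 ∈ T ∨ i ∈ T) ∧
            (∀ i ∈ insert a s, i - 1 ∉ T ∨ i ∉ T)).card
          = ((S ∩ {a - 1, a}) ×ˢ (S'.powerset.filter fun T =>
              (∀ i ∈ s, i - 1 ∈ T ∨ i ∈ T) ∧ (∀ i ∈ s, i - 1 ∉ T ∨ i ∉ T))).card := by
        apply Finset.card_nbij'
          (i := fun T => (if a - 1 ∈ T then a - 1 else a, T \ {a - 1, a}))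
          (j := fun p => insert p.1 p.2)
        · -- forward maps into product
          intro T hT
          simp only [mem_coe, mem_filter, mem_powerset, forall_mem_insert] at hT
          obtain ⟨hTS, ⟨hba, hbs⟩, ⟨hca, hcs⟩⟩ := hT
          simp only [mem_coe, mem_product, mem_inter, mem_filter, mem_powerset]
          refine ⟨?_, ?_, ?_, ?_⟩
          · by_cases h : a - 1 ∈ T
            · simp [h, hTS h]
            · rcases hba with h' | h'
              · exact absurd h' h
              · simp [h, hTS h']
          · exact sdiff_subset_sdiff hTS le_rfl
          · intro i hi
            obtain ⟨n1, n2, n3, n4⟩ := hnot i hi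
            rcases hbs i hi with h | h
            · left; simp [mem_sdiff, h, n1, n2]
            · right; simp [mem_sdiff, h, n3, n4]
          · intro i hi
            rcases hcs i hi with h | h
            · left; simp [mem_sdiff, h]
            · right; simp [mem_sdiff, h]
        · -- backward maps into filter
          rintro ⟨x, T'⟩ hp
          simp only [mem_coe, mem_product, mem_inter, mem_filter, mem_powerset, mem_insert,
            mem_singleton] at hp
          obtain ⟨⟨hxS, hx⟩, hT'S, hbs, hcs⟩ := hp
          have hT'a : a - 1 ∉ T' ∧ a ∉ T' := by
            constructor <;> intro h <;> have := hT'S h <;> simp [hS'def, mem_sdiff] at this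
          simp only [mem_coe, mem_filter, mem_powerset, forall_mem_insert]
          refine ⟨?_, ⟨?_, ?_⟩, ?_, ?_⟩
          · intro y hy
            rcases Finset.mem_insert.mp hy with rfl | hy'
            · exact hxS
            · exact (Finset.mem_sdiff.mp (hT'S hy')).1
          · rcases hx with rfl | rfl
            · left; exact mem_insert_self _ _
            · right; exact mem_insert_self _ _
          · intro i hi
            rcases hbs i hi with h | h
            · left; exact mem_insert_of_mem h
            · right; exact mem_insert_of_mem h
          · rcases hx with rfl | rfl
            · right; intro h
              rcases Finset.mem_insert.mp h with h' | h'
              · omega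
              · exact hT'a.2 h'
            · left; intro h
              rcases Finset.mem_insert.mp h with h' | h'
              · omega
              · exact hT'a.1 h'
          · intro i hi
            obtain ⟨n1, n2, n3, n4⟩ := hnot i hi
            rcases hcs i hi with h | h
            · left; intro h'
              rcases Finset.mem_insert.mp h' with h'' | h''
              · rcases hx with rfl | rfl <;> omega
              · exact h h''
            · right; intro h'
              rcases Finset.mem_insert.mp h' with h'' | h''
              · rcases hx with rfl | rfl <;> omega
              · exact h h''
        · -- left inverse
          intro T hT
          simp only [mem_coe, mem_filter, mem_powerset, forall_mem_insert] at hT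
          obtain ⟨hTS, ⟨hba, _⟩, ⟨hca, _⟩⟩ := hT
          by_cases h : a - 1 ∈ T
          · have hne : a ∉ T := hca.resolve_left (not_not_intro h)
            simp only [if_pos h]
            ext y
            simp only [mem_insert, mem_sdiff, mem_insert, mem_singleton]
            constructor
            · rintro (rfl | ⟨hy, _⟩) <;> [exact h; exact hy]
            · intro hy
              by_cases hy1 : y = a - 1
              · exact Or.inl hy1
              · by_cases hy2 : y = a
                · exact absurd (hy2 ▸ hy) hne
                · exact Or.inr ⟨hy, by tauto⟩
          · have haT : a ∈ T := hba.resolve_left h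
            simp only [if_neg h]
            ext y
            simp only [mem_insert, mem_sdiff, mem_insert, mem_singleton]
            constructor
            · rintro (rfl | ⟨hy, _⟩) <;> [exact haT; exact hy]
            · intro hy
              by_cases hy2 : y = a
              · exact Or.inl hy2
              · by_cases hy1 : y = a - 1
                · exact absurd (hy1 ▸ hy) h
                · exact Or.inr ⟨hy, by tauto⟩
        · -- right inverse
          rintro ⟨x, T'⟩ hp
          simp only [mem_coe, mem_product, mem_inter, mem_filter, mem_powerset, mem_insert,
            mem_singleton] at hp
          obtain ⟨⟨hxS, hx⟩, hT'S, _, _⟩ := hp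
          have hT'a : a - 1 ∉ T' ∧ a ∉ T' := by
            constructor <;> intro h <;> have := hT'S h <;> simp [hS'def, mem_sdiff] at this
          have hsd : insert x T' \ {a - 1, a} = T' := by
            ext y
            simp only [mem_sdiff, mem_insert, mem_singleton]
            constructor
            · rintro ⟨rfl | hy, hne⟩
              · rcases hx with rfl | rfl <;> tauto
              · exact hy
            · intro hy
              have h1 : y ≠ a - 1 := by rintro rfl; exact hT'a.1 hy
              have h2 : y ≠ a := by rintro rfl; exact hT'a.2 hy
              exact ⟨Or.inr hy, by tauto⟩
          rcases hx with rfl | rfl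
          · have hmem : a - 1 ∈ insert (a - 1) T' := mem_insert_self _ _
            simp [hmem, hsd]
          · have hna : x - 1 ∉ insert x T' := by
              simp only [mem_insert]
              push_neg
              exact ⟨by omega, hT'a.1⟩
            simp [hna, hsd]
      rw [key, Finset.card_product]
      have hcond_iff : (∀ i ∈ s, i - 1 ∈ S' ∨ i ∈ S') ↔ (∀ i ∈ s, i - 1 ∈ S ∨ i ∈ S) := by
        constructor <;> intro h i hi <;> obtain ⟨e1, e2⟩ := hmemS' i hi <;>
          rcases h i hi with h' | h'
        · exact Or.inl (e1.mp h')
        · exact Or.inr (e2.mp h')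
        · exact Or.inl (e1.mpr h')
        · exact Or.inr (e2.mpr h')
      rw [ih h2' hsp' S']
      have hm1 : 1 ≤ (S ∩ {a - 1, a}).card := by
        rcases hc with h | h
        · exact Finset.card_pos.mpr ⟨a - 1, by simp [h]⟩
        · exact Finset.card_pos.mpr ⟨a, by simp [h]⟩
      have hm2 : (S ∩ {a - 1, a}).card ≤ 2 := by
        calc (S ∩ {a - 1, a}).card ≤ ({a - 1, a} : Finset ℕ).card :=
              Finset.card_le_card Finset.inter_subset_right
          _ ≤ 2 := Finset.card_insert_le _ _ |>.trans (by simp)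
      have hScard : S'.card + (S ∩ {a - 1, a}).card = S.card := by
        rw [hS'def]
        rw [Finset.card_sdiff_add_card_inter]
      by_cases hcond : ∀ i ∈ s, i - 1 ∈ S ∨ i ∈ S
      · rw [if_pos (hcond_iff.mpr hcond), if_pos ?side]
        case side =>
          intro i hi
          rcases Finset.mem_insert.mp hi with rfl | hi'
          · exact hc
          · exact hcond i hi'
        have hsle : s.card ≤ S'.card :=
          card_le_aux s S' h2' hsp' (fun i hi => (hcond_iff.mpr hcond) i hi)
        rw [Finset.card_insert_of_notMem ha]
        have hm : (S ∩ {a - 1, a}).card = 1 ∨ (S ∩ {a - 1, a}).card = 2 := by omega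
        rcases hm with hm | hm
        · rw [hm, one_mul]
          congr 1
          omega
        · rw [hm]
          have : S.card - (s.card + 1) = (S'.card - s.card) + 1 := by omega
          rw [this, pow_succ]
          ring
      · rw [if_neg (fun h => hcond (hcond_iff.mp h)), mul_zero,
          if_neg (fun h => hcond (fun i hi => h i (mem_insert_of_mem hi)))]
    · -- a's interval misses S entirely
      have hcond : ¬ ∀ i ∈ insert a s, i - 1 ∈ S ∨ i ∈ S := by
        intro h; exact hc (h a (mem_insert_self _ _))
      rw [if_neg hcond]
      rw [Finset.card_eq_zero, Finset.filter_eq_empty_iff]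
      intro T hT
      rw [mem_powerset] at hT
      push_neg at hc
      rintro ⟨hb, -⟩
      rcases hb a (mem_insert_self _ _) with h | h
      · exact hc.1 (hT h)
      · exact hc.2 (hT h)

/-- for a cd-word `w` of degree `n` and any `S ⊆ [n]`, the number of
`T ⊆ S` with both `T ∈ b[I^w]` and `[n] \ T ∈ b[I^w]` is `2^{|S| - |S_w|}` if
`S ∈ b[I^w]`, and `0` otherwise. -/
theorem stmt_4 (n : ℕ) (w : List Bool) (S : Finset ℕ)
    (hw : degw w = n) (hS : S ⊆ Finset.Icc 1 n) :
    (S.powerset.filter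
        (fun T => blocks w T ∧ blocks w (Finset.Icc 1 n \ T))).card
      = if blocks w S then 2 ^ (S.card - (Sw w).card) else 0 := by
  classical
  have h2 := Sw_two_le w
  have hle : ∀ i ∈ Sw w, i ≤ n := fun i hi => hw ▸ Sw_le_deg w i hi
  have hsp := Sw_spacing w
  have hfilter : ∀ T ∈ S.powerset,
      ((blocks w T ∧ blocks w (Finset.Icc 1 n \ T)) ↔
        ((∀ i ∈ Sw w, i - 1 ∈ T ∨ i ∈ T) ∧ (∀ i ∈ Sw w, i - 1 ∉ T ∨ i ∉ T))) := by
    intro T _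
    unfold blocks
    refine and_congr Iff.rfl (forall₂_congr fun i hi => ?_)
    have hi2 := h2 i hi
    have hin := hle i hi
    have b1 : i - 1 ∈ Finset.Icc 1 n := by rw [Finset.mem_Icc]; omega
    have b2 : i ∈ Finset.Icc 1 n := by rw [Finset.mem_Icc]; omega
    simp [Finset.mem_sdiff, b1, b2]
  rw [Finset.filter_congr hfilter, count_main (Sw w) h2 hsp S]
  rfl
end

section
/- In the free associative algebra Q⟨y_1,y_2,...⟩ (with y_0 := 1), the antipode determined by the coproduct Δ(y_k) = Σ_{i+j=k} y_i ⊗ y_j sends y_n to −(χ_n − (−1)^n y_n), where χ_n = Σ_{i+j=n} (−1)^i y_i y_j; consequently, in the quotient A_E = Q⟨y_1,y_2,...⟩/I_E by the ideal generated by all χ_k, the antipode satisfies s(y_n) = (−1)^n y_n and more generally s(y_{β_1}···y_{β_k}) = (−1)^{β_1+···+β_k} y_{β_k}···y_{β_1}. -/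
/-- The generators `y_k` of the free associative algebra `ℚ⟨y_1, y_2, …⟩`
(with the convention `y_0 = 1`). -/
noncomputable def y (k : ℕ) : FreeAlgebra ℚ ℕ :=
  if k = 0 then 1 else FreeAlgebra.ι ℚ k

/-- `χ_n = Σ_{i+j=n} (-1)^i y_i y_j`. -/
noncomputable def chi (n : ℕ) : FreeAlgebra ℚ ℕ :=
  ∑ i ∈ Finset.range (n + 1), ((-1 : ℚ) ^ i) • (y i * y (n - i))

/-- `A_E = ℚ⟨y_1, y_2, …⟩ / I_E`, where `I_E` is the two-sided ideal generated by
the Euler relations `χ_k`, `k ≥ 1`. -/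
abbrev AE : Type := RingQuot (fun a b : FreeAlgebra ℚ ℕ => ∃ k, 1 ≤ k ∧ a = chi k ∧ b = 0)

/-- The quotient map `ℚ⟨y_1, y_2, …⟩ → A_E`. -/
noncomputable def mkA : FreeAlgebra ℚ ℕ →+* AE := RingQuot.mkRingHom _

/-- The image of `y_k` in `A_E`. -/
noncomputable def yA (k : ℕ) : AE := mkA (y k)

lemma mkA_chi_eq_zero {k : ℕ} (hk : 1 ≤ k) : mkA (chi k) = 0 := by
  have := RingQuot.mkRingHom_rel
    (r := fun a b : FreeAlgebra ℚ ℕ => ∃ k, 1 ≤ k ∧ a = chi k ∧ b = 0)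
    ⟨k, hk, rfl, rfl⟩
  simpa [mkA] using this

lemma yA_zero : yA 0 = 1 := by simp [yA, y]

lemma mkA_chi (n : ℕ) :
    mkA (chi n) = ∑ i ∈ Finset.range (n + 1), (-1 : AE) ^ i * (yA i * yA (n - i)) := by
  have hchi : chi n
      = ∑ i ∈ Finset.range (n + 1), ((-1 : FreeAlgebra ℚ ℕ) ^ i) * (y i * y (n - i)) := by
    unfold chi
    refine Finset.sum_congr rfl fun i _ => ?_
    rw [Algebra.smul_def]
    simp
  rw [hchi, map_sum]
  refine Finset.sum_congr rfl fun i _ => ?_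
  simp [yA]

/-- if `s` is the antipode of `A_E` (characterized as the algebra
anti-homomorphism satisfying the recursion `s(y_n) = -Σ_{i=0}^{n-1} s(y_i) y_{n-i}`
coming from the coproduct `Δ(y_k) = Σ_{i+j=k} y_i ⊗ y_j`), then
`s(y_n) = -(χ_n - (-1)^n y_n)`, hence `s(y_n) = (-1)^n y_n` since `χ_n` vanishes
in `A_E`, and more generally
`s(y_{β_1} ⋯ y_{β_k}) = (-1)^{β_1 + ⋯ + β_k} y_{β_k} ⋯ y_{β_1}`. -/
theorem stmt_9 (s : AE → AE) (hone : s 1 = 1)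
    (hanti : ∀ a b : AE, s (a * b) = s b * s a)
    (hrec : ∀ n : ℕ, 1 ≤ n →
      s (yA n) = -∑ i ∈ Finset.range n, s (yA i) * yA (n - i)) :
    (∀ n : ℕ, 1 ≤ n → s (yA n) = -(mkA (chi n) - (-1 : AE) ^ n * yA n)) ∧
    (∀ n : ℕ, s (yA n) = (-1 : AE) ^ n * yA n) ∧
    (∀ β : List ℕ, s ((β.map yA).prod)
        = (-1 : AE) ^ β.sum * ((β.reverse.map yA).prod)) := by
  have h1 : ∀ n : ℕ, 1 ≤ n → (∀ i < n, s (yA i) = (-1 : AE) ^ i * yA i) →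
      s (yA n) = -(mkA (chi n) - (-1 : AE) ^ n * yA n) := by
    intro n hn ih
    rw [hrec n hn, mkA_chi, Finset.sum_range_succ, Nat.sub_self, yA_zero, mul_one]
    have : ∑ i ∈ Finset.range n, s (yA i) * yA (n - i)
        = ∑ i ∈ Finset.range n, (-1 : AE) ^ i * (yA i * yA (n - i)) := by
      refine Finset.sum_congr rfl fun i hi => ?_
      rw [ih i (Finset.mem_range.mp hi), mul_assoc]
    rw [this, add_sub_cancel_right]
  have h2 : ∀ n : ℕ, s (yA n) = (-1 : AE) ^ n * yA n := by
    intro n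
    induction n using Nat.strong_induction_on with
    | _ n ih =>
      match n with
      | 0 => rw [yA_zero]; simp [hone]
      | Nat.succ m =>
        rw [h1 (m + 1) (Nat.succ_le_succ (Nat.zero_le m)) fun i hi => ih i hi,
          mkA_chi_eq_zero (Nat.succ_le_succ (Nat.zero_le m))]
        simp [Nat.add_comm]
  refine ⟨fun n hn => by rw [h2 n, mkA_chi_eq_zero hn]; simp, h2, ?_⟩
  intro β
  induction β with
  | nil => simpa using hone
  | cons b β ih =>
    have hc : ∀ (x : AE) (k : ℕ), x * (-1 : AE) ^ k = (-1 : AE) ^ k * x :=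
      fun x k => ((Commute.neg_one_left x).pow_left k).eq.symm
    simp only [List.map_cons, List.prod_cons, List.sum_cons, List.reverse_cons,
      List.map_append, List.prod_append, List.map_nil, List.prod_nil]
    rw [hanti, ih, h2 b]
    rw [pow_add]
    calc (-1 : AE) ^ β.sum * (β.reverse.map yA).prod * ((-1 : AE) ^ b * yA b)
        = (-1 : AE) ^ b * (-1 : AE) ^ β.sum * ((β.reverse.map yA).prod * (yA b * 1)) := by
          rw [mul_one]
          rw [mul_assoc, ← mul_assoc ((β.reverse.map yA).prod), hc, mul_assoc, ← mul_assoc,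
            hc, ← mul_assoc]
      _ = _ := by ring_nf
end

section
/- For graded posets P and Q, the g-polynomial is multiplicative: g(P × Q, x) = g(P, x) · g(Q, x). -/
/-- The `g`-truncation: from `f = Σ_{i=0}^{n} κ_i x^i`, form
`Σ_{i=0}^{⌊n/2⌋} (κ_i - κ_{i-1}) x^i` (with `κ_{-1} = 0`). -/
noncomputable def gOf (f : Polynomial ℚ) (n : ℕ) : Polynomial ℚ :=
  ∑ i ∈ Finset.range (n / 2 + 1),
    Polynomial.C (f.coeff i - if i = 0 then 0 else f.coeff (i - 1)) * Polynomial.X ^ i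

/-- The `f`-polynomial of a finite bounded poset with rank function `r`, defined by
the recursion `f(P,x) = Σ_{y ≠ ⊤} g([⊥,y], x) (x-1)^{r(⊤)-1-r(y)}` (with
`f(P,x) = g(P,x) = 1` when the rank is `0`), computed with fuel. -/
noncomputable def fP : ℕ → (α : Type) → (i1 : Fintype α) → (i2 : PartialOrder α) →
    (i3 : BoundedOrder α) → (α → ℕ) → Polynomial ℚ
  | 0, _, _, _, _, _ => 1
  | k + 1, α, i1, i2, i3, r => by
    letI := i1; letI := i2; letI := i3
    classical
    exact if r ⊤ = 0 then 1 else
      ∑ y ∈ Finset.univ.filter (fun y : α => y ≠ ⊤),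
        (letI : Fintype (Set.Icc (⊥ : α) y) := (Set.toFinite _).fintype
         letI : Fact ((⊥ : α) ≤ y) := ⟨bot_le⟩
         (if r y = 0 then 1 else
            gOf (fP k (Set.Icc (⊥ : α) y) inferInstance inferInstance inferInstance
              (fun z => r z.1)) (r y - 1))) *
          (Polynomial.X - 1) ^ (r ⊤ - 1 - r y)

/-- The `g`-polynomial of a finite bounded poset with rank function `r`. -/
noncomputable def gP (α : Type) [i1 : Fintype α] [i2 : PartialOrder α]
    [i3 : BoundedOrder α] (r : α → ℕ) : Polynomial ℚ :=
  if r ⊤ = 0 then 1 else gOf (fP (Fintype.card α) α i1 i2 i3 r) (r ⊤ - 1)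

/-- `r` is the rank function of a graded poset: `r(⊥) = 0` and `r` increases
by exactly one along covers. -/
def IsGradedRank (α : Type) [PartialOrder α] [BoundedOrder α] (r : α → ℕ) : Prop :=
  r ⊥ = 0 ∧ ∀ a b : α, a ⋖ b → r b = r a + 1

open Polynomial Finset

/-! ### Polynomial lemmas -/

lemma gOf_coeff (f : ℚ[X]) (n i : ℕ) :
    (gOf f n).coeff i =
      if i ≤ n / 2 then f.coeff i - (if i = 0 then 0 else f.coeff (i-1)) else 0 := by
  simp only [gOf, finset_sum_coeff, coeff_C_mul, coeff_X_pow, mul_ite, mul_one, mul_zero]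
  rw [Finset.sum_ite_eq (Finset.range (n/2+1)) i
    (fun j => f.coeff j - if j = 0 then 0 else f.coeff (j-1))]
  simp [Nat.lt_succ_iff]

lemma coeff_Xsub1_mul (f : ℚ[X]) (i : ℕ) :
    ((X - 1) * f).coeff i = (if i = 0 then 0 else f.coeff (i-1)) - f.coeff i := by
  rw [sub_mul, one_mul, coeff_sub]
  cases i with
  | zero => simp
  | succ j => simp [coeff_X_mul]

lemma D_coeff (f : ℚ[X]) (n i : ℕ) (hi : i ≤ n/2) :
    ((X - 1) * f + gOf f n).coeff i = 0 := by
  rw [coeff_add, coeff_Xsub1_mul, gOf_coeff, if_pos hi]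
  ring

lemma natDegree_gOf_le (f : ℚ[X]) (n : ℕ) : (gOf f n).natDegree ≤ n / 2 := by
  rw [Polynomial.natDegree_le_iff_coeff_eq_zero]
  intro i hi
  rw [gOf_coeff, if_neg (by omega)]

lemma gOf_mul (f1 f2 F : ℚ[X]) (p q : ℕ) (hp : 1 ≤ p) (hq : 1 ≤ q)
    (hF : (X - 1) * F =
      ((X-1)*f1 + gOf f1 (p-1)) * ((X-1)*f2 + gOf f2 (q-1)) - gOf f1 (p-1) * gOf f2 (q-1)) :
    gOf F (p + q - 1) = gOf f1 (p-1) * gOf f2 (q-1) := by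
  set g1 := gOf f1 (p-1) with hg1
  set g2 := gOf f2 (q-1) with hg2
  have hDD : (X - 1) * F + g1 * g2 =
      ((X-1)*f1 + g1) * ((X-1)*f2 + g2) := by rw [hF]; ring
  have hD : ∀ i ≤ (p+q-1)/2, ((X-1)*F + g1*g2).coeff i = 0 := by
    intro i hi
    rw [hDD, coeff_mul]
    apply Finset.sum_eq_zero
    rintro ⟨j, k⟩ hjk
    rw [Finset.HasAntidiagonal.mem_antidiagonal] at hjk
    rcases (by omega : j ≤ (p-1)/2 ∨ k ≤ (q-1)/2) with h | h
    · rw [D_coeff _ _ _ h, zero_mul]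
    · rw [D_coeff _ _ _ h, mul_zero]
  ext i
  rw [gOf_coeff]
  by_cases h : i ≤ (p+q-1)/2
  · have h0 := hD i h
    rw [coeff_add, coeff_Xsub1_mul] at h0
    set t := if i = 0 then (0:ℚ) else F.coeff (i-1) with ht
    rw [if_pos h]
    linarith
  · rw [if_neg h]
    refine (Polynomial.coeff_eq_zero_of_natDegree_lt ?_).symm
    calc (g1 * g2).natDegree ≤ g1.natDegree + g2.natDegree := natDegree_mul_le
    _ ≤ (p-1)/2 + (q-1)/2 := Nat.add_le_add (natDegree_gOf_le _ _) (natDegree_gOf_le _ _)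
    _ < i := by omega

/-! ### Order isomorphisms -/

/-- restriction of an order iso to lower intervals -/
def iccIso {α β : Type} [PartialOrder α] [PartialOrder β] [OrderBot α] [OrderBot β]
    (e : α ≃o β) (x : α) :
    Set.Icc (⊥ : α) x ≃o Set.Icc (⊥ : β) (e x) where
  toFun z := ⟨e z.1, ⟨bot_le, e.le_iff_le.2 z.2.2⟩⟩
  invFun w := ⟨e.symm w.1, ⟨bot_le, e.symm_apply_le.2 w.2.2⟩⟩
  left_inv z := Subtype.ext (e.symm_apply_apply z.1)
  right_inv w := Subtype.ext (e.apply_symm_apply w.1)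
  map_rel_iff' := by intro a b; exact e.le_iff_le

/-- the interval `[⊥, (y,z)]` of a product is the product of intervals -/
def prodIccIso {α β : Type} [PartialOrder α] [PartialOrder β] [OrderBot α] [OrderBot β]
    (y : α) (z : β) :
    Set.Icc (⊥ : α × β) (y, z) ≃o Set.Icc (⊥ : α) y × Set.Icc (⊥ : β) z where
  toFun w := (⟨w.1.1, ⟨bot_le, w.2.2.1⟩⟩, ⟨w.1.2, ⟨bot_le, w.2.2.2⟩⟩)
  invFun p := ⟨(p.1.1, p.2.1), ⟨bot_le, ⟨p.1.2.2, p.2.2.2⟩⟩⟩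
  left_inv w := rfl
  right_inv p := rfl
  map_rel_iff' := by
    intro a b
    simp [Prod.le_def, Subtype.coe_le_coe]
    rfl

/-- a bounded poset is its own interval `[⊥, ⊤]` -/
def univIso {α : Type} [PartialOrder α] [BoundedOrder α] : α ≃o Set.Icc (⊥ : α) (⊤ : α) where
  toFun a := ⟨a, ⟨bot_le, le_top⟩⟩
  invFun z := z.1
  left_inv a := rfl
  right_inv z := rfl
  map_rel_iff' := Iff.rfl

/-- if `α` is trivial, `α × β ≃o β` -/
def prodTrivIso {α β : Type} [PartialOrder α] [PartialOrder β] [BoundedOrder α]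
    (h : ∀ a : α, a = ⊥) : α × β ≃o β where
  toFun p := p.2
  invFun b := (⊥, b)
  left_inv p := by ext <;> simp [(h p.1).symm]
  right_inv b := rfl
  map_rel_iff' := by
    intro a b
    constructor
    · intro hab
      exact ⟨le_of_eq (by rw [h a.1, h b.1]), hab⟩
    · intro hab; exact hab.2

/-- if `β` is trivial, `α × β ≃o α` -/
def prodTrivIso' {α β : Type} [PartialOrder α] [PartialOrder β] [BoundedOrder β]
    (h : ∀ b : β, b = ⊥) : α × β ≃o α where
  toFun p := p.1
  invFun a := (a, ⊥)
  left_inv p := by ext <;> simp [(h p.2).symm]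
  right_inv a := rfl
  map_rel_iff' := by
    intro a b
    constructor
    · intro hab
      exact ⟨hab, le_of_eq (by rw [h a.2, h b.2])⟩
    · intro hab; exact hab.1

/-! ### basic fP lemmas -/

lemma fP_congr (k : ℕ) (α : Type) (i1 i1' : Fintype α) (i2 : PartialOrder α)
    (i3 i3' : BoundedOrder α) (r : α → ℕ) :
    fP k α i1 i2 i3 r = fP k α i1' i2 i3' r := by
  congr 1 <;> exact Subsingleton.elim _ _

open Classical in
lemma fP_succ (k : ℕ) (α : Type) (i1 : Fintype α) (i2 : PartialOrder α) (i3 : BoundedOrder α)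
    (r : α → ℕ) :
    fP (k+1) α i1 i2 i3 r = if r ⊤ = 0 then 1 else
      ∑ y ∈ Finset.univ.filter (fun y : α => y ≠ ⊤),
        (letI : Fintype (Set.Icc (⊥ : α) y) := (Set.toFinite _).fintype
         letI : Fact ((⊥ : α) ≤ y) := ⟨bot_le⟩
         (if r y = 0 then 1 else
            gOf (fP k (Set.Icc (⊥ : α) y) inferInstance inferInstance inferInstance
              (fun z => r z.1)) (r y - 1))) *
          (Polynomial.X - 1) ^ (r ⊤ - 1 - r y) := by
  rw [fP]

lemma card_Icc_lt (α : Type) [Fintype α] [PartialOrder α] [BoundedOrder α] {y : α}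
    (hy : y ≠ ⊤) :
    letI : Fintype (Set.Icc (⊥ : α) y) := (Set.toFinite _).fintype
    Fintype.card (Set.Icc (⊥ : α) y) < Fintype.card α := by
  letI : Fintype (Set.Icc (⊥ : α) y) := (Set.toFinite _).fintype
  apply Fintype.card_lt_of_injective_of_notMem (Subtype.val) Subtype.val_injective
    (b := ⊤)
  intro ⟨⟨z, hz⟩, hz2⟩
  exact hy (top_le_iff.1 (hz2 ▸ hz.2))

lemma fP_fuel : ∀ (N : ℕ) (α : Type) (i1 : Fintype α) (i2 : PartialOrder α)
    (i3 : BoundedOrder α) (r : α → ℕ) (k k' : ℕ),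
    Fintype.card α ≤ N → Fintype.card α ≤ k → Fintype.card α ≤ k' →
    fP k α i1 i2 i3 r = fP k' α i1 i2 i3 r := by
  intro N
  induction N using Nat.strong_induction_on with
  | _ N IH =>
    intro α i1 i2 i3 r k k' hN hk hk'
    letI := i1; letI := i2; letI := i3
    classical
    have hpos : 0 < Fintype.card α := Fintype.card_pos_iff.2 ⟨⊥⟩
    obtain ⟨a, rfl⟩ : ∃ a, k = a + 1 := ⟨k - 1, by omega⟩
    obtain ⟨b, rfl⟩ : ∃ b, k' = b + 1 := ⟨k' - 1, by omega⟩
    rw [fP_succ, fP_succ]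
    rcases eq_or_ne (r ⊤) 0 with h | h
    · rw [if_pos h, if_pos h]
    · rw [if_neg h, if_neg h]
      apply Finset.sum_congr rfl
      intro y hy
      have hy' : y ≠ ⊤ := by simpa using (Finset.mem_filter.1 hy).2
      congr 1
      have hcard := card_Icc_lt α hy'
      rcases eq_or_ne (r y) 0 with h2 | h2
      · rw [if_pos h2, if_pos h2]
      · rw [if_neg h2, if_neg h2]
        congr 1
        exact IH (Fintype.card α - 1) (by omega) _ _ _ _ _ _ _
          (by omega) (by omega) (by omega)

lemma fP_iso : ∀ (k : ℕ) (α β : Type) (i1 : Fintype α) (i2 : PartialOrder α)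
    (i3 : BoundedOrder α) (j1 : Fintype β) (j2 : PartialOrder β) (j3 : BoundedOrder β)
    (e : α ≃o β) (r : β → ℕ),
    fP k β j1 j2 j3 r = fP k α i1 i2 i3 (fun a => r (e a)) := by
  intro k
  induction k with
  | zero => intros; rfl
  | succ k IH =>
    intro α β i1 i2 i3 j1 j2 j3 e r
    letI := i1; letI := i2; letI := i3; letI := j1; letI := j2; letI := j3
    classical
    rw [fP_succ, fP_succ]
    have htop : r (e ⊤) = r ⊤ := by rw [map_top]
    rcases eq_or_ne (r ⊤) 0 with h | h
    · rw [if_pos h, if_pos (htop.trans h)]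
    · rw [if_neg h, if_neg (fun hh => h (htop ▸ hh))]
      refine Finset.sum_equiv e.symm.toEquiv ?_ ?_
      · intro y
        simp only [Finset.mem_filter, Finset.mem_univ, true_and, ne_eq]
        have hco : e.symm.toEquiv y = e.symm y := rfl
        rw [hco]
        constructor
        · intro hy hc
          apply hy
          have h3 := congrArg e hc
          rwa [e.apply_symm_apply, map_top] at h3
        · intro hy hc; apply hy; rw [hc, map_top]
      · intro y hy
        simp only [Finset.mem_filter, Finset.mem_univ, true_and, ne_eq] at hy
        obtain ⟨x, rfl⟩ : ∃ x : α, y = e x := ⟨e.symm y, (e.apply_symm_apply y).symm⟩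
        have hsx : e.symm.toEquiv (e x) = x := e.symm_apply_apply x
        rw [hsx, htop]
        congr 1
        rcases eq_or_ne (r (e x)) 0 with h2 | h2
        · rw [if_pos h2, if_pos h2]
        · rw [if_neg h2, if_neg h2]
          congr 1
          exact IH _ _ _ _ _ _ _ _ (iccIso e x) (fun z => r z.1)

/-! ### gP lemmas -/

lemma gP_congr (α : Type) (i1 i1' : Fintype α) (i2 : PartialOrder α)
    (i3 i3' : BoundedOrder α) (r : α → ℕ) :
    @gP α i1 i2 i3 r = @gP α i1' i2 i3' r := by
  congr 1 <;> exact Subsingleton.elim _ _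

lemma gP_iso (α β : Type) [i1 : Fintype α] [i2 : PartialOrder α] [i3 : BoundedOrder α]
    [j1 : Fintype β] [j2 : PartialOrder β] [j3 : BoundedOrder β]
    (e : α ≃o β) (r : β → ℕ) : gP β r = gP α (fun a => r (e a)) := by
  unfold gP
  have htop : r (e ⊤) = r ⊤ := by rw [map_top]
  have hcard : Fintype.card β = Fintype.card α := (Fintype.card_congr e.toEquiv).symm
  simp only [htop]
  rcases eq_or_ne (r ⊤) 0 with h | h
  · rw [if_pos h, if_pos h]
  · rw [if_neg h, if_neg h, hcard, fP_iso _ _ _ i1 i2 i3 j1 j2 j3 e r]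

/-- the g-polynomial of the lower interval `[⊥, y]`. -/
noncomputable def gI (α : Type) [Fintype α] [PartialOrder α] [OrderBot α]
    (r : α → ℕ) (y : α) : Polynomial ℚ :=
  letI : Fintype (Set.Icc (⊥ : α) y) := (Set.toFinite _).fintype
  letI : Fact ((⊥ : α) ≤ y) := ⟨bot_le⟩
  gP (Set.Icc (⊥ : α) y) (fun z => r z.1)

lemma gI_top (α : Type) [i1 : Fintype α] [i2 : PartialOrder α] [i3 : BoundedOrder α]
    (r : α → ℕ) : gI α r ⊤ = gP α r := by
  unfold gI
  letI : Fintype (Set.Icc (⊥ : α) (⊤ : α)) := (Set.toFinite _).fintype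
  letI : Fact ((⊥ : α) ≤ (⊤:α)) := ⟨bot_le⟩
  have h2 : gP (Set.Icc (⊥:α) (⊤:α)) (fun z => r z.1) = gP α (fun a => r a) :=
    gP_iso α (Set.Icc (⊥:α) (⊤:α)) univIso (fun z => r z.1)
  rw [h2]

/-! ### rank lemmas -/

lemma grank_lt {α : Type} [Fintype α] [PartialOrder α] [BoundedOrder α] {r : α → ℕ}
    (h : IsGradedRank α r) {a b : α} (hab : a < b) : r a < r b := by
  have hwf : WellFounded ((· > ·) : α → α → Prop) := (Finite.to_wellFoundedGT).wf
  revert hab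
  refine hwf.induction (C := fun a => a < b → r a < r b) a ?_
  intro x IH hxb
  obtain ⟨c, hxc, hcb⟩ := exists_covBy_le_of_lt hxb
  rcases eq_or_lt_of_le hcb with rfl | hlt
  · rw [h.2 x _ hxc]; omega
  · have h1 := IH c hxc.lt hlt
    have h2 := h.2 x c hxc
    omega

lemma grank_le {α : Type} [Fintype α] [PartialOrder α] [BoundedOrder α] {r : α → ℕ}
    (h : IsGradedRank α r) {a b : α} (hab : a ≤ b) : r a ≤ r b := by
  rcases eq_or_lt_of_le hab with rfl | hlt
  · exact le_rfl
  · exact (grank_lt h hlt).le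

lemma all_bot_of_rank_top_zero {α : Type} [Fintype α] [PartialOrder α] [BoundedOrder α]
    {r : α → ℕ} (h : IsGradedRank α r) (h0 : r ⊤ = 0) (a : α) : a = ⊥ := by
  rcases eq_or_lt_of_le (bot_le : (⊥:α) ≤ a) with heq | hlt
  · exact heq.symm
  · exfalso
    have h1 := grank_lt h hlt
    have h2 := grank_le h (le_top : a ≤ ⊤)
    omega

/-! ### graded rank transfer -/

lemma isGraded_Icc {α : Type} [Fintype α] [PartialOrder α] [BoundedOrder α] {r : α → ℕ}
    (h : IsGradedRank α r) (y : α) :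
    letI : Fact ((⊥ : α) ≤ y) := ⟨bot_le⟩
    IsGradedRank (Set.Icc (⊥ : α) y) (fun z => r z.1) := by
  letI : Fact ((⊥ : α) ≤ y) := ⟨bot_le⟩
  constructor
  · show r ((⊥ : Set.Icc (⊥:α) y) : α) = 0
    exact h.1
  · intro a b hab
    have hcov : a.1 ⋖ b.1 := by
      constructor
      · exact Subtype.coe_lt_coe.2 hab.1
      · intro c hac hcb
        exact hab.2 (c := ⟨c, ⟨bot_le, hcb.le.trans b.2.2⟩⟩)
          (Subtype.mk_lt_mk.2 hac) (Subtype.mk_lt_mk.2 hcb)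
    exact h.2 _ _ hcov

lemma isGraded_prod {α β : Type} [Fintype α] [PartialOrder α] [BoundedOrder α]
    [Fintype β] [PartialOrder β] [BoundedOrder β] {r : α → ℕ} {r' : β → ℕ}
    (hα : IsGradedRank α r) (hβ : IsGradedRank β r') :
    IsGradedRank (α × β) (fun p => r p.1 + r' p.2) := by
  constructor
  · show r (⊥:α) + r' (⊥:β) = 0
    rw [hα.1, hβ.1]
  · rintro ⟨a1, a2⟩ ⟨b1, b2⟩ hab
    rcases Prod.mk_covBy_mk_iff.1 hab with ⟨hc, rfl⟩ | ⟨hc, rfl⟩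
    · have := hα.2 _ _ hc; simp only; omega
    · have := hβ.2 _ _ hc; simp only; omega

/-! ### the f-polynomial as a sum of interval g-polynomials -/

lemma inner_eq (α : Type) [i1 : Fintype α] [i2 : PartialOrder α] [i3 : BoundedOrder α]
    (r : α → ℕ) (y : α) (hy : y ≠ ⊤) (k : ℕ) (hk : Fintype.card α ≤ k + 1) :
    (letI : Fintype (Set.Icc (⊥ : α) y) := (Set.toFinite _).fintype
     letI : Fact ((⊥ : α) ≤ y) := ⟨bot_le⟩
     (if r y = 0 then 1 else
        gOf (fP k (Set.Icc (⊥ : α) y) inferInstance inferInstance inferInstance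
          (fun z => r z.1)) (r y - 1))) = gI α r y := by
  letI : Fintype (Set.Icc (⊥ : α) y) := (Set.toFinite _).fintype
  letI : Fact ((⊥ : α) ≤ y) := ⟨bot_le⟩
  have hcard := card_Icc_lt α hy
  unfold gI gP
  have htop : ((⊤ : Set.Icc (⊥:α) y) : α) = y := rfl
  simp only [htop]
  rcases eq_or_ne (r y) 0 with h | h
  · rw [if_pos h, if_pos h]
  · rw [if_neg h, if_neg h]
    congr 1
    exact fP_fuel (Fintype.card α) (Set.Icc (⊥:α) y) _ _ _ (fun z => r z.1)
      k (Fintype.card (Set.Icc (⊥:α) y)) (by omega) (by omega) le_rfl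

open Classical in
lemma fP_eq_sum (α : Type) [i1 : Fintype α] [i2 : PartialOrder α] [i3 : BoundedOrder α]
    (r : α → ℕ) (h : r ⊤ ≠ 0) (k : ℕ) (hk : Fintype.card α ≤ k + 1) :
    fP (k+1) α i1 i2 i3 r =
      ∑ y ∈ Finset.univ.filter (fun y : α => y ≠ ⊤),
        gI α r y * (Polynomial.X - 1) ^ (r ⊤ - 1 - r y) := by
  rw [fP_succ, if_neg h]
  apply Finset.sum_congr rfl
  intro y hy
  have hy' : y ≠ ⊤ := by simpa using (Finset.mem_filter.1 hy).2
  rw [inner_eq α r y hy' k hk]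

open Classical in
lemma key_sum (α : Type) [i1 : Fintype α] [i2 : PartialOrder α] [i3 : BoundedOrder α]
    (r : α → ℕ) (hg : IsGradedRank α r) (h : r ⊤ ≠ 0) :
    ∑ y : α, gI α r y * (Polynomial.X - 1) ^ (r ⊤ - r y)
      = (Polynomial.X - 1) * fP (Fintype.card α) α i1 i2 i3 r + gP α r := by
  have hpos : 0 < Fintype.card α := Fintype.card_pos_iff.2 ⟨⊥⟩
  obtain ⟨k, hcard⟩ : ∃ k, Fintype.card α = k + 1 := ⟨Fintype.card α - 1, by omega⟩
  rw [← Finset.sum_filter_add_sum_filter_not Finset.univ (fun y : α => y ≠ ⊤)]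
  have h1 : Finset.univ.filter (fun y : α => ¬ y ≠ ⊤) = {⊤} := by
    ext z; simp
  rw [h1, Finset.sum_singleton, Nat.sub_self, pow_zero, mul_one, gI_top]
  congr 1
  rw [hcard, fP_eq_sum α r h k (le_of_eq hcard), Finset.mul_sum]
  apply Finset.sum_congr rfl
  intro y hy
  have hy' : y ≠ ⊤ := by simpa using (Finset.mem_filter.1 hy).2
  have hlt : r y < r ⊤ := grank_lt hg (lt_top_iff_ne_top.2 hy')
  have hexp : r ⊤ - r y = (r ⊤ - 1 - r y) + 1 := by omega
  rw [hexp, pow_succ]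
  ring

open Classical in
theorem keyThm : ∀ (n : ℕ) (α β : Type) (i1 : Fintype α) (i2 : PartialOrder α)
    (i3 : BoundedOrder α) (j1 : Fintype β) (j2 : PartialOrder β) (j3 : BoundedOrder β)
    (r : α → ℕ) (r' : β → ℕ), IsGradedRank α r → IsGradedRank β r' →
    r ⊤ + r' ⊤ ≤ n →
    gP (α × β) (fun p => r p.1 + r' p.2) = gP α r * gP β r' := by
  intro n
  induction n using Nat.strong_induction_on with
  | _ n IH =>
    intro α β i1 i2 i3 j1 j2 j3 r r' hα hβ hn
    letI := i1; letI := i2; letI := i3; letI := j1; letI := j2; letI := j3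
    rcases eq_or_ne (r ⊤) 0 with hp | hp
    · -- α is trivial
      have hall : ∀ a : α, a = ⊥ := all_bot_of_rank_top_zero hα hp
      have hfun : (fun p : α × β => r p.1 + r' p.2) = (fun w : α × β => r' w.2) :=
        funext fun p => by rw [hall p.1, hα.1, zero_add]
      have hgα : gP α r = 1 := by rw [gP, if_pos hp]
      have h2 : gP (α × β) (fun w : α × β => r' w.2) = gP β r' :=
        (gP_iso (α × β) β (prodTrivIso hall) r').symm
      rw [hfun, h2, hgα, one_mul]
    rcases eq_or_ne (r' ⊤) 0 with hq | hq
    · -- β is trivial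
      have hall : ∀ b : β, b = ⊥ := all_bot_of_rank_top_zero hβ hq
      have hfun : (fun p : α × β => r p.1 + r' p.2) = (fun w : α × β => r w.1) :=
        funext fun p => by rw [hall p.2, hβ.1, add_zero]
      have hgβ : gP β r' = 1 := by rw [gP, if_pos hq]
      have h2 : gP (α × β) (fun w : α × β => r w.1) = gP α r :=
        (gP_iso (α × β) α (prodTrivIso' hall) r).symm
      rw [hfun, h2, hgβ, mul_one]
    -- main case
    set R := fun p : α × β => r p.1 + r' p.2 with hRdef
    have hgprod : IsGradedRank (α × β) R := isGraded_prod hα hβ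
    have hRtop : R ⊤ = r ⊤ + r' ⊤ := rfl
    have hRne : R ⊤ ≠ 0 := by rw [hRtop]; omega
    -- term identity on lower intervals
    have hterm : ∀ w : α × β, w ≠ ⊤ → gI (α × β) R w = gI α r w.1 * gI β r' w.2 := by
      rintro ⟨y, z⟩ hw
      letI F1 : Fintype (Set.Icc (⊥ : α × β) (y, z)) := (Set.toFinite _).fintype
      letI : Fact ((⊥ : α × β) ≤ (y, z)) := ⟨bot_le⟩
      letI F2 : Fintype (Set.Icc (⊥ : α) y) := (Set.toFinite _).fintype
      letI : Fact ((⊥ : α) ≤ y) := ⟨bot_le⟩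
      letI F3 : Fintype (Set.Icc (⊥ : β) z) := (Set.toFinite _).fintype
      letI : Fact ((⊥ : β) ≤ z) := ⟨bot_le⟩
      have hwlt : (y, z) < (⊤ : α × β) := lt_top_iff_ne_top.2 hw
      have hrlt : R (y, z) < R ⊤ := grank_lt hgprod hwlt
      have hIH := IH (n - 1) (by omega) (Set.Icc (⊥ : α) y) (Set.Icc (⊥ : β) z)
        F2 inferInstance inferInstance F3 inferInstance inferInstance
        (fun a => r a.1) (fun b => r' b.1)
        (isGraded_Icc hα y) (isGraded_Icc hβ z)
        (by
          show r ((⊤ : Set.Icc (⊥:α) y) : α) + r' ((⊤ : Set.Icc (⊥:β) z) : β) ≤ n - 1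
          have h7 : ((⊤ : Set.Icc (⊥:α) y) : α) = y := rfl
          have h8 : ((⊤ : Set.Icc (⊥:β) z) : β) = z := rfl
          rw [h7, h8]
          have h9 : r y + r' z < r ⊤ + r' ⊤ := hrlt
          omega)
      show gP (Set.Icc (⊥ : α × β) (y, z)) (fun w => R w.1)
        = gP (Set.Icc (⊥ : α) y) (fun a => r a.1) * gP (Set.Icc (⊥ : β) z) (fun b => r' b.1)
      calc gP (Set.Icc (⊥ : α × β) (y, z)) (fun w => R w.1)
          = gP (Set.Icc (⊥ : α) y × Set.Icc (⊥ : β) z)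
              (fun u => (fun w : Set.Icc (⊥ : α × β) (y, z) => R w.1)
                ((prodIccIso y z).symm u)) :=
            gP_iso _ _ (prodIccIso y z).symm (fun w => R w.1)
        _ = gP (Set.Icc (⊥ : α) y) (fun a => r a.1) * gP (Set.Icc (⊥ : β) z) (fun b => r' b.1) :=
            hIH
    -- abbreviations
    have hgα : gP α r = gOf (fP (Fintype.card α) α i1 i2 i3 r) (r ⊤ - 1) := by
      rw [gP, if_neg hp]
    have hgβ : gP β r' = gOf (fP (Fintype.card β) β j1 j2 j3 r') (r' ⊤ - 1) := by
      rw [gP, if_neg hq]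
    have hA := key_sum α r hα hp
    have hB := key_sum β r' hβ hq
    -- the product f-polynomial as a sum
    have hposprod : 0 < Fintype.card (α × β) := Fintype.card_pos_iff.2 ⟨⊥⟩
    obtain ⟨k, hk⟩ : ∃ k, Fintype.card (α × β) = k + 1 :=
      ⟨Fintype.card (α × β) - 1, by omega⟩
    have h1 : (Polynomial.X - 1) * fP (Fintype.card (α × β)) (α × β) inferInstance inferInstance inferInstance R
        = ∑ w ∈ Finset.univ.filter (fun w : α × β => w ≠ ⊤),
            (gI α r w.1 * gI β r' w.2) * (Polynomial.X - 1) ^ (R ⊤ - R w) := by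
      rw [hk, fP_eq_sum (α × β) R hRne k (le_of_eq hk), Finset.mul_sum]
      apply Finset.sum_congr (Finset.filter_congr_decidable _ _ _)
      intro w hw
      have hw' : w ≠ ⊤ := by simpa using (Finset.mem_filter.1 hw).2
      rw [hterm w hw']
      have hrlt : R w < R ⊤ := grank_lt hgprod (lt_top_iff_ne_top.2 hw')
      have hexp : R ⊤ - R w = (R ⊤ - 1 - R w) + 1 := by omega
      rw [hexp, pow_succ]
      ring
    -- the product of the two full sums
    have h4 : (∑ y : α, gI α r y * (Polynomial.X - 1) ^ (r ⊤ - r y))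
        * (∑ z : β, gI β r' z * (Polynomial.X - 1) ^ (r' ⊤ - r' z))
        = (∑ w ∈ Finset.univ.filter (fun w : α × β => w ≠ ⊤),
            (gI α r w.1 * gI β r' w.2) * (Polynomial.X - 1) ^ (R ⊤ - R w))
          + gP α r * gP β r' := by
      rw [Finset.sum_mul_sum]
      have hall : ∀ w : α × β,
          (gI α r w.1 * (Polynomial.X - 1) ^ (r ⊤ - r w.1))
            * (gI β r' w.2 * (Polynomial.X - 1) ^ (r' ⊤ - r' w.2))
          = (gI α r w.1 * gI β r' w.2) * (Polynomial.X - 1) ^ (R ⊤ - R w) := by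
        intro w
        have h5 : r w.1 ≤ r ⊤ := grank_le hα le_top
        have h6 : r' w.2 ≤ r' ⊤ := grank_le hβ le_top
        have hexp : R ⊤ - R w = (r ⊤ - r w.1) + (r' ⊤ - r' w.2) := by
          show r ⊤ + r' ⊤ - (r w.1 + r' w.2) = _
          omega
        rw [hexp, pow_add]
        ring
      calc ∑ y : α, ∑ z : β,
            (gI α r y * (Polynomial.X - 1) ^ (r ⊤ - r y))
              * (gI β r' z * (Polynomial.X - 1) ^ (r' ⊤ - r' z))
          = ∑ w : α × β, (gI α r w.1 * gI β r' w.2) * (Polynomial.X - 1) ^ (R ⊤ - R w) := by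
            rw [Fintype.sum_prod_type (f := fun w : α × β =>
              (gI α r w.1 * gI β r' w.2) * (Polynomial.X - 1) ^ (R ⊤ - R w))]
            refine Finset.sum_congr rfl fun y _ => Finset.sum_congr rfl fun z _ => hall (y, z)
        _ = _ := by
            rw [← Finset.sum_filter_add_sum_filter_not Finset.univ (fun w : α × β => w ≠ ⊤)]
            congr 1
            have hfe : Finset.univ.filter (fun w : α × β => ¬ w ≠ ⊤) = {⊤} := by
              ext w; simp
            rw [hfe, Finset.sum_singleton]
            show (gI α r (⊤:α) * gI β r' (⊤:β)) * (Polynomial.X - 1) ^ (R ⊤ - R ⊤) = _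
            rw [Nat.sub_self, pow_zero, mul_one, gI_top, gI_top]
    -- assemble
    have hF : (Polynomial.X - 1) * fP (Fintype.card (α × β)) (α × β) inferInstance inferInstance inferInstance R
        = ((Polynomial.X - 1) * fP (Fintype.card α) α i1 i2 i3 r
            + gOf (fP (Fintype.card α) α i1 i2 i3 r) (r ⊤ - 1))
          * ((Polynomial.X - 1) * fP (Fintype.card β) β j1 j2 j3 r'
            + gOf (fP (Fintype.card β) β j1 j2 j3 r') (r' ⊤ - 1))
          - gOf (fP (Fintype.card α) α i1 i2 i3 r) (r ⊤ - 1)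
            * gOf (fP (Fintype.card β) β j1 j2 j3 r') (r' ⊤ - 1) := by
      rw [← hgα, ← hgβ, ← hA, ← hB, h1]
      exact eq_sub_of_add_eq h4.symm
    have hmain := gOf_mul (fP (Fintype.card α) α i1 i2 i3 r)
      (fP (Fintype.card β) β j1 j2 j3 r')
      (fP (Fintype.card (α × β)) (α × β) inferInstance inferInstance inferInstance R) (r ⊤) (r' ⊤)
      (by omega) (by omega) hF
    rw [gP, if_neg hRne, hgα, hgβ]
    rw [hRtop]
    exact hmain

theorem stmt_16' (α β : Type) [Fintype α] [PartialOrder α] [BoundedOrder α]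
    [Fintype β] [PartialOrder β] [BoundedOrder β]
    (r : α → ℕ) (r' : β → ℕ)
    (hα : IsGradedRank α r) (hβ : IsGradedRank β r') :
    gP (α × β) (fun p => r p.1 + r' p.2) = gP α r * gP β r' :=
  keyThm (r ⊤ + r' ⊤) α β _ _ _ _ _ _ r r' hα hβ le_rfl


/-- for graded posets `P` and `Q`,
`g(P × Q, x) = g(P, x) · g(Q, x)`. -/
theorem stmt_16 (α β : Type) [Fintype α] [PartialOrder α] [BoundedOrder α]
    [Fintype β] [PartialOrder β] [BoundedOrder β]
    (r : α → ℕ) (r' : β → ℕ)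
    (hα : IsGradedRank α r) (hβ : IsGradedRank β r') :
    gP (α × β) (fun p => r p.1 + r' p.2) = gP α r * gP β r' :=
  stmt_16' α β r r' hα hβ
end

section
/- For all n ≥ 0, the degree-(n+1) homogeneous component of the quasisymmetric functions decomposes as a direct sum Q_{n+1} = L(Q_n) ⊕ M_{(1)}·Q_n, where L is the linear map sending M_{(β_1,...,β_k)} (composition of n) to M_{(β_1,...,β_{k−1},β_k+1)} (composition of n+1), and M_{(1)}·Q_n is the image of multiplication by M_{(1)}. -/
/-- The ambient free `ℚ`-module with basis the monomial quasisymmetric functions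
`M_β`, indexed by compositions `β` written as lists of positive integers. -/
noncomputable def Lmap : (List ℕ →₀ ℚ) →ₗ[ℚ] (List ℕ →₀ ℚ) :=
  Finsupp.lsum ℚ (fun β => LinearMap.toSpanSingleton ℚ (List ℕ →₀ ℚ)
    (if β = [] then 0
     else Finsupp.single (β.dropLast ++ [β.getLastD 0 + 1]) 1))

/-- Multiplication by `M_{(1)}`, via the product rule
`M_{(1)}·M_β = M_{(β,1)} + Σ_{i=1}^{k} (M_{(β_1,…,β_{i-1},1,β_i,…,β_k)}
+ M_{(β_1,…,β_i+1,…,β_k)})`. -/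
noncomputable def mulM1 : (List ℕ →₀ ℚ) →ₗ[ℚ] (List ℕ →₀ ℚ) :=
  Finsupp.lsum ℚ (fun β => LinearMap.toSpanSingleton ℚ (List ℕ →₀ ℚ)
    (Finsupp.single (β ++ [1]) 1 +
      ∑ j ∈ Finset.range β.length,
        (Finsupp.single (β.take j ++ 1 :: β.drop j) (1 : ℚ) +
         Finsupp.single (β.set j (β.getD j 0 + 1)) 1)))

/-- `Q_m`: the span of the `M_β` with `β` a composition of `m`. -/
noncomputable def Qm (m : ℕ) : Submodule ℚ (List ℕ →₀ ℚ) :=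
  Submodule.span ℚ
    {v | ∃ β : List ℕ, β.sum = m ∧ (∀ a ∈ β, 0 < a) ∧ v = Finsupp.single β 1}

namespace Stmt19

/-- statistic: s γ = Σ_i [γ_i = 1] * 2^i (head-indexed) -/
def s : List ℕ → ℕ
  | [] => 0
  | a :: t => (if a = 1 then 1 else 0) + 2 * s t

lemma s_nil : s [] = 0 := rfl
lemma s_cons (a : ℕ) (t : List ℕ) : s (a :: t) = (if a = 1 then 1 else 0) + 2 * s t := rfl

lemma s_lt (l : List ℕ) : s l < 2 ^ l.length := by
  induction l with
  | nil => simp [s]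
  | cons a t ih =>
    rw [s_cons, List.length_cons, pow_succ]
    split <;> omega

lemma s_append_one (l : List ℕ) : s (l ++ [1]) = s l + 2 ^ l.length := by
  induction l with
  | nil => simp [s]
  | cons a t ih =>
    rw [List.cons_append, s_cons, ih, s_cons, List.length_cons, pow_succ]
    ring

lemma cons_one_key (l : List ℕ) : (1 :: l) = l ++ [1] ∨ s (1 :: l) < s (l ++ [1]) := by
  induction l with
  | nil => left; rfl
  | cons a t ih =>
    by_cases ha : a = 1
    · subst ha
      rcases ih with h | h
      · left; rw [List.cons_append, ← h]
      · right
        have e : (1 :: t) ++ [1] = 1 :: (t ++ [1]) := rfl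
        rw [e, s_cons, s_cons, s_cons] at *
        simp only [if_pos rfl] at h ⊢
        omega
    · right
      have h1 : s (1 :: a :: t) = 1 + 2 * ((if a = 1 then 1 else 0) + 2 * s t) := rfl
      have h2 : s ((a :: t) ++ [1]) = (if a = 1 then 1 else 0) + 2 * (s t + 2 ^ t.length) := by
        rw [List.cons_append, s_cons, s_append_one]
      have h3 := s_lt t
      rw [h1, h2, if_neg ha]
      omega

lemma ins_key (l : List ℕ) (j : ℕ) :
    l.take j ++ 1 :: l.drop j = l ++ [1] ∨ s (l.take j ++ 1 :: l.drop j) < s (l ++ [1]) := by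
  induction l generalizing j with
  | nil => left; simp
  | cons a t ih =>
    cases j with
    | zero => simpa using cons_one_key (a :: t)
    | succ j =>
      have h : (a :: t).take (j+1) ++ 1 :: (a :: t).drop (j+1) = a :: (t.take j ++ 1 :: t.drop j) := by
        simp
      rcases ih j with h1 | h1
      · left; rw [h, h1, List.cons_append]
      · right
        rw [h, List.cons_append, s_cons, s_cons]
        omega

lemma s_set_le (l : List ℕ) (j : ℕ) (hpos : ∀ a ∈ l, 0 < a) :
    s (l.set j (l.getD j 0 + 1)) ≤ s l := by
  induction l generalizing j with
  | nil => simp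
  | cons a t ih =>
    cases j with
    | zero =>
      have ha : ¬ (a + 1 = 1) := by have := hpos a (by simp); omega
      rw [List.getD_cons_zero, List.set_cons_zero, s_cons, s_cons, if_neg ha]
      split <;> omega
    | succ j =>
      rw [List.getD_cons_succ, List.set_cons_succ, s_cons, s_cons]
      have := ih j (fun b hb => hpos b (List.mem_cons_of_mem _ hb))
      omega

lemma s_set_lt (l : List ℕ) (j : ℕ) (hpos : ∀ a ∈ l, 0 < a) :
    s (l.set j (l.getD j 0 + 1)) < s (l ++ [1]) := by
  have h1 := s_set_le l j hpos
  have h2 := s_lt l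
  rw [s_append_one]
  omega

lemma sum_set (l : List ℕ) (j : ℕ) (h : j < l.length) :
    (l.set j (l.getD j 0 + 1)).sum = l.sum + 1 := by
  induction l generalizing j with
  | nil => simp at h
  | cons a t ih =>
    cases j with
    | zero => rw [List.getD_cons_zero, List.set_cons_zero, List.sum_cons, List.sum_cons]; omega
    | succ j =>
      rw [List.getD_cons_succ, List.set_cons_succ, List.sum_cons, List.sum_cons,
        ih j (by simpa using h)]
      omega

lemma sum_ins (l : List ℕ) (j : ℕ) : (l.take j ++ 1 :: l.drop j).sum = l.sum + 1 := by
  rw [List.sum_append, List.sum_cons, ← List.sum_take_add_sum_drop l j]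
  omega


def comps (m : ℕ) : Set (List ℕ) := {β | β.sum = m ∧ ∀ a ∈ β, 0 < a}

lemma Qm_eq (m : ℕ) : Qm m = Finsupp.supported ℚ ℚ (comps m) := by
  rw [Finsupp.supported_eq_span_single, Qm]
  congr 1
  ext v
  constructor
  · rintro ⟨β, h1, h2, rfl⟩; exact ⟨β, ⟨h1, h2⟩, rfl⟩
  · rintro ⟨β, ⟨h1, h2⟩, rfl⟩; exact ⟨β, h1, h2, rfl⟩

lemma append_one_mem_comps {m : ℕ} {β : List ℕ} (h : β ∈ comps m) : β ++ [1] ∈ comps (m + 1) := by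
  obtain ⟨h1, h2⟩ := h
  refine ⟨by simp [h1], fun a ha => ?_⟩
  rcases List.mem_append.1 ha with h | h
  · exact h2 a h
  · simp at h; omega

lemma ins_mem_comps {m : ℕ} {β : List ℕ} (h : β ∈ comps m) (j : ℕ) :
    β.take j ++ 1 :: β.drop j ∈ comps (m + 1) := by
  obtain ⟨h1, h2⟩ := h
  refine ⟨by rw [sum_ins, h1], fun a ha => ?_⟩
  rcases List.mem_append.1 ha with h | h
  · exact h2 a (List.mem_of_mem_take h)
  · rcases List.mem_cons.1 h with h | h
    · omega
    · exact h2 a (List.mem_of_mem_drop h)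

lemma set_mem_comps {m : ℕ} {β : List ℕ} (h : β ∈ comps m) {j : ℕ} (hj : j < β.length) :
    β.set j (β.getD j 0 + 1) ∈ comps (m + 1) := by
  obtain ⟨h1, h2⟩ := h
  refine ⟨by rw [sum_set _ _ hj, h1], fun a ha => ?_⟩
  rcases List.mem_or_eq_of_mem_set ha with h | h
  · exact h2 a h
  · omega

lemma L_target_mem_comps {m : ℕ} {β : List ℕ} (h : β ∈ comps m) (hne : β ≠ []) :
    β.dropLast ++ [β.getLastD 0 + 1] ∈ comps (m + 1) := by
  obtain ⟨h1, h2⟩ := h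
  have hL : β.getLastD 0 = β.getLast hne := by
    rw [List.getLastD_eq_getLast?, List.getLast?_eq_getLast hne]; rfl
  constructor
  · have := List.dropLast_append_getLast hne
    have hsum : β.dropLast.sum + β.getLast hne = m := by
      rw [← h1]; conv_rhs => rw [← this]
      simp
    rw [List.sum_append, hL]
    simp
    omega
  · intro a ha
    rcases List.mem_append.1 ha with h | h
    · exact h2 a (List.mem_of_mem_dropLast h)
    · simp at h; omega

/-- the explicit value of `mulM1` on a basis vector -/
lemma mulM1_single (β : List ℕ) :
    mulM1 (Finsupp.single β 1) =
      Finsupp.single (β ++ [1]) 1 +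
        ∑ j ∈ Finset.range β.length,
          (Finsupp.single (β.take j ++ 1 :: β.drop j) (1 : ℚ) +
           Finsupp.single (β.set j (β.getD j 0 + 1)) 1) := by
  rw [mulM1, Finsupp.lsum_single, LinearMap.toSpanSingleton_apply_one]

lemma Lmap_single (β : List ℕ) :
    Lmap (Finsupp.single β 1) =
      (if β = [] then 0 else Finsupp.single (β.dropLast ++ [β.getLastD 0 + 1]) (1:ℚ)) := by
  rw [Lmap, Finsupp.lsum_single, LinearMap.toSpanSingleton_apply_one]


lemma single_mem_Qm {m : ℕ} {δ : List ℕ} (h : δ ∈ comps m) :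
    Finsupp.single δ (1:ℚ) ∈ Qm m :=
  Submodule.subset_span ⟨δ, h.1, h.2, rfl⟩

lemma comps_decomp {m : ℕ} {γ : List ℕ} (h : γ ∈ comps (m+1)) :
    γ.dropLast ++ [γ.getLastD 0] = γ ∧ γ.dropLast.sum + γ.getLastD 0 = m + 1 ∧
      1 ≤ γ.getLastD 0 ∧ ∀ a ∈ γ.dropLast, 0 < a := by
  have hne : γ ≠ [] := by rintro rfl; simpa using h.1
  have hL : γ.getLastD 0 = γ.getLast hne := by
    rw [List.getLastD_eq_getLast?, List.getLast?_eq_getLast hne]; rfl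
  have hd : γ.dropLast ++ [γ.getLastD 0] = γ := by
    rw [hL]; exact List.dropLast_append_getLast hne
  refine ⟨hd, ?_, ?_, fun a ha => h.2 a (List.mem_of_mem_dropLast ha)⟩
  · rw [← h.1]
    conv_rhs => rw [← hd]
    simp
  · exact h.2 _ (by rw [hL]; exact List.getLast_mem hne)

/-- the direct sum candidate -/
noncomputable def SUP (n : ℕ) : Submodule ℚ (List ℕ →₀ ℚ) :=
  Submodule.map Lmap (Qm n) ⊔ Submodule.map mulM1 (Qm n)

lemma lastBig_mem {n : ℕ} {γ : List ℕ} (h : γ ∈ comps (n+1)) (h2 : 2 ≤ γ.getLastD 0) :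
    Finsupp.single γ (1:ℚ) ∈ Submodule.map Lmap (Qm n) := by
  obtain ⟨hd, hsum, _, hpos⟩ := comps_decomp h
  refine ⟨Finsupp.single (γ.dropLast ++ [γ.getLastD 0 - 1]) 1, single_mem_Qm ⟨?_, ?_⟩, ?_⟩
  · rw [List.sum_append, List.sum_cons, List.sum_nil]; omega
  · intro a ha
    rcases List.mem_append.1 ha with h | h
    · exact hpos a h
    · rw [List.mem_singleton] at h; omega
  · rw [Lmap_single, if_neg (by simp)]
    rw [List.dropLast_concat, List.getLastD_concat]
    have h3 : γ.getLastD 0 - 1 + 1 = γ.getLastD 0 := by omega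
    rw [h3, hd]

lemma mem_SUP (n : ℕ) : ∀ (N : ℕ) (γ : List ℕ), s γ < N → γ ∈ comps (n+1) →
    Finsupp.single γ (1:ℚ) ∈ SUP n := by
  intro N
  induction N with
  | zero => intro γ h; omega
  | succ N ih =>
    intro γ hN hγ
    obtain ⟨hd, hsum, hge1, hpos⟩ := comps_decomp hγ
    rcases Nat.lt_or_ge (γ.getLastD 0) 2 with hlast | hlast
    · -- last part equals 1
      have hlast1 : γ.getLastD 0 = 1 := by omega
      set β := γ.dropLast with hβ
      have hγeq : β ++ [1] = γ := by rw [hβ, ← hlast1]; exact hd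
      have hβc : β ∈ comps n := ⟨by omega, hpos⟩
      set E := mulM1 (Finsupp.single β (1:ℚ)) with hE
      set c := E γ with hc
      have hEval : ∀ δ : List ℕ, E δ =
          (if β ++ [1] = δ then (1:ℚ) else 0) +
          ∑ j ∈ Finset.range β.length,
            ((if β.take j ++ 1 :: β.drop j = δ then (1:ℚ) else 0) +
             (if β.set j (β.getD j 0 + 1) = δ then (1:ℚ) else 0)) := by
        intro δ
        rw [hE, mulM1_single, Finsupp.add_apply, Finsupp.finset_sum_apply,
          Finsupp.single_apply]
        congr 1
        refine Finset.sum_congr rfl fun j hj => ?_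
        rw [Finsupp.add_apply, Finsupp.single_apply, Finsupp.single_apply]
      have hsum_nonneg : ∀ δ : List ℕ, (0:ℚ) ≤
          ∑ j ∈ Finset.range β.length,
            ((if β.take j ++ 1 :: β.drop j = δ then (1:ℚ) else 0) +
             (if β.set j (β.getD j 0 + 1) = δ then (1:ℚ) else 0)) := fun δ =>
        Finset.sum_nonneg fun j _ =>
          add_nonneg (by split <;> norm_num) (by split <;> norm_num)
      have hc1 : (1:ℚ) ≤ c := by
        rw [hc, hEval, if_pos hγeq]
        have := hsum_nonneg γ
        linarith
      have hc0 : c ≠ 0 := by intro h0; rw [h0] at hc1; norm_num at hc1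
      set r := E - c • Finsupp.single γ (1:ℚ) with hr
      have hrsupp : r ∈ Finsupp.supported ℚ ℚ {δ | δ ∈ comps (n+1) ∧ s δ < s γ} := by
        rw [Finsupp.mem_supported']
        intro δ hδ
        by_cases hδγ : δ = γ
        · subst hδγ
          rw [hr, Finsupp.sub_apply, Finsupp.smul_apply, Finsupp.single_eq_same, ← hc,
            smul_eq_mul, mul_one, sub_self]
        · have h1 : r δ = E δ := by
            rw [hr, Finsupp.sub_apply, Finsupp.smul_apply, Finsupp.single_apply,
              if_neg (fun hh => hδγ hh.symm), smul_eq_mul, mul_zero, sub_zero]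
          rw [h1, hEval, if_neg (fun hh => hδγ (by rw [← hh, hγeq]))]
          rw [Finset.sum_eq_zero, add_zero]
          intro j hj
          have hjlt : j < β.length := Finset.mem_range.1 hj
          rw [if_neg, if_neg, add_zero]
          · intro hh
            exact hδ ⟨by rw [← hh]; exact set_mem_comps hβc hjlt,
              by rw [← hh, ← hγeq]; exact s_set_lt β j hβc.2⟩
          · intro hh
            rcases ins_key β j with he | he
            · exact hδγ (by rw [← hh, he, hγeq])
            · exact hδ ⟨by rw [← hh]; exact ins_mem_comps hβc j,
                by rw [← hh, ← hγeq]; exact he⟩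
      have hrSUP : r ∈ SUP n := by
        have hle : Finsupp.supported ℚ ℚ {δ | δ ∈ comps (n+1) ∧ s δ < s γ} ≤ SUP n := by
          rw [Finsupp.supported_eq_span_single]
          apply Submodule.span_le.2
          rintro v ⟨δ, ⟨hδ1, hδ2⟩, rfl⟩
          exact ih δ (by omega) hδ1
        exact hle hrsupp
      have hESUP : E ∈ SUP n :=
        Submodule.mem_sup_right ⟨Finsupp.single β 1, single_mem_Qm hβc, rfl⟩
      have heq : c • Finsupp.single γ (1:ℚ) = E - r := by rw [hr]; abel
      have hmem : c • Finsupp.single γ (1:ℚ) ∈ SUP n := by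
        rw [heq]; exact Submodule.sub_mem _ hESUP hrSUP
      have := Submodule.smul_mem (SUP n) c⁻¹ hmem
      rwa [smul_smul, inv_mul_cancel₀ hc0, one_smul] at this
    · exact Submodule.mem_sup_left (lastBig_mem hγ hlast)

lemma sup_eq (n : ℕ) : SUP n = Qm (n+1) := by
  apply le_antisymm
  · apply sup_le
    · rw [Qm, Submodule.map_span]
      apply Submodule.span_le.2
      rintro v ⟨w, ⟨β, hs, hp, rfl⟩, rfl⟩
      rw [Lmap_single]
      split
      · exact Submodule.zero_mem _
      · exact single_mem_Qm (L_target_mem_comps ⟨hs, hp⟩ (by assumption))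
    · rw [Qm, Submodule.map_span]
      apply Submodule.span_le.2
      rintro v ⟨w, ⟨β, hs, hp, rfl⟩, rfl⟩
      rw [mulM1_single]
      refine Submodule.add_mem _ (single_mem_Qm (append_one_mem_comps ⟨hs, hp⟩)) ?_
      refine Submodule.sum_mem _ fun j hj => Submodule.add_mem _ ?_ ?_
      · exact single_mem_Qm (ins_mem_comps ⟨hs, hp⟩ j)
      · exact single_mem_Qm (set_mem_comps ⟨hs, hp⟩ (Finset.mem_range.1 hj))
  · rw [Qm]
    apply Submodule.span_le.2
    rintro v ⟨γ, h1, h2, rfl⟩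
    exact mem_SUP n (s γ + 1) γ (Nat.lt_succ_self _) ⟨h1, h2⟩


lemma mulM1_single_apply (β δ : List ℕ) :
    mulM1 (Finsupp.single β (1:ℚ)) δ =
      (if β ++ [1] = δ then (1:ℚ) else 0) +
      ∑ j ∈ Finset.range β.length,
        ((if β.take j ++ 1 :: β.drop j = δ then (1:ℚ) else 0) +
         (if β.set j (β.getD j 0 + 1) = δ then (1:ℚ) else 0)) := by
  rw [mulM1_single, Finsupp.add_apply, Finsupp.finset_sum_apply, Finsupp.single_apply]
  congr 1
  refine Finset.sum_congr rfl fun j hj => ?_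
  rw [Finsupp.add_apply, Finsupp.single_apply, Finsupp.single_apply]

lemma apply_eq_sum (F : (List ℕ →₀ ℚ) →ₗ[ℚ] (List ℕ →₀ ℚ)) (v : List ℕ →₀ ℚ) :
    F v = ∑ β ∈ v.support, v β • F (Finsupp.single β 1) := by
  conv_lhs => rw [← Finsupp.sum_single v]
  rw [Finsupp.sum, map_sum]
  refine Finset.sum_congr rfl fun β hβ => ?_
  rw [← map_smul, Finsupp.smul_single, smul_eq_mul, mul_one]

lemma getLastD_pos {m : ℕ} {β : List ℕ} (hβc : β ∈ comps m) (hne : β ≠ []) :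
    0 < β.getLastD 0 := by
  have hL : β.getLastD 0 = β.getLast hne := by
    rw [List.getLastD_eq_getLast?, List.getLast?_eq_getLast hne]; rfl
  rw [hL]; exact hβc.2 _ (List.getLast_mem hne)

lemma inf_bot (n : ℕ) :
    Submodule.map Lmap (Qm n) ⊓ Submodule.map mulM1 (Qm n) = ⊥ := by
  rw [eq_bot_iff]
  rintro x hx
  obtain ⟨hxL, hxM⟩ := Submodule.mem_inf.1 hx
  obtain ⟨u, hu, hux⟩ := hxL
  obtain ⟨v, hv, hvx⟩ := hxM
  rw [Submodule.mem_bot]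
  by_contra hx0
  have hv0 : v ≠ 0 := by rintro rfl; rw [map_zero] at hvx; exact hx0 hvx.symm
  have hvs : ↑v.support ⊆ comps n := (Finsupp.mem_supported ℚ v).1 (by rwa [← Qm_eq])
  have hus : ↑u.support ⊆ comps n := (Finsupp.mem_supported ℚ u).1 (by rwa [← Qm_eq])
  obtain ⟨β', hβ'mem, hmax⟩ := Finset.exists_max_image v.support (fun β => s (β ++ [1]))
      (Finsupp.support_nonempty_iff.2 hv0)
  set δ := β' ++ [1] with hδ
  have hδlast : δ.getLastD 0 = 1 := List.getLastD_concat
  have hLδ : x δ = 0 := by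
    rw [← hux, apply_eq_sum, Finsupp.finset_sum_apply]
    refine Finset.sum_eq_zero fun β hβ => ?_
    rw [Finsupp.smul_apply, Lmap_single]
    have hβc : β ∈ comps n := hus hβ
    split
    · simp
    · rename_i hne
      rw [Finsupp.single_apply, if_neg, smul_zero]
      intro hh
      have h1 := congrArg (fun l => List.getLastD l 0) hh
      simp only [List.getLastD_concat] at h1
      have h2 := getLastD_pos hβc hne
      omega
  have hMδ : x δ ≠ 0 := by
    rw [← hvx, apply_eq_sum, Finsupp.finset_sum_apply,
      Finset.sum_eq_single_of_mem β' hβ'mem ?_]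
    · rw [Finsupp.smul_apply, smul_eq_mul]
      apply mul_ne_zero (Finsupp.mem_support_iff.1 hβ'mem)
      rw [mulM1_single_apply, if_pos rfl]
      have hnn : (0:ℚ) ≤ ∑ j ∈ Finset.range β'.length,
          ((if β'.take j ++ 1 :: β'.drop j = δ then (1:ℚ) else 0) +
           (if β'.set j (β'.getD j 0 + 1) = δ then (1:ℚ) else 0)) :=
        Finset.sum_nonneg fun j _ =>
          add_nonneg (by split <;> norm_num) (by split <;> norm_num)
      intro h0
      linarith
    · intro β hβ hne
      have hβc : β ∈ comps n := hvs hβ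
      have hsle : s (β ++ [1]) ≤ s δ := hmax β hβ
      rw [Finsupp.smul_apply, mulM1_single_apply, if_neg, Finset.sum_eq_zero, add_zero,
        smul_zero]
      · intro j hj
        have hjlt : j < β.length := Finset.mem_range.1 hj
        rw [if_neg, if_neg, add_zero]
        · intro hh
          have := s_set_lt β j hβc.2
          rw [hh] at this
          omega
        · intro hh
          rcases ins_key β j with he | he
          · rw [hh] at he
            refine hne ?_
            have h9 := congrArg List.dropLast he
            simp only [hδ, List.dropLast_concat] at h9
            exact h9.symm
          · rw [hh] at he
            omega
      · intro hh
        refine hne ?_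
        have h9 := congrArg List.dropLast hh
        simp only [hδ, List.dropLast_concat] at h9
        exact h9
  exact hMδ hLδ

theorem stmt_19' (n : ℕ) :
    Submodule.map Lmap (Qm n) ⊔ Submodule.map mulM1 (Qm n) = Qm (n + 1) ∧
    Submodule.map Lmap (Qm n) ⊓ Submodule.map mulM1 (Qm n) = ⊥ := by
  constructor
  · have := sup_eq n
    rwa [SUP] at this
  · exact inf_bot n

end Stmt19

/-- for all `n ≥ 0`, `Q_{n+1} = L(Q_n) ⊕ M_{(1)}·Q_n`, where `L`
sends `M_{(β_1,…,β_k)}` to `M_{(β_1,…,β_{k-1},β_k+1)}`. -/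
theorem stmt_19 (n : ℕ) :
    Submodule.map Lmap (Qm n) ⊔ Submodule.map mulM1 (Qm n) = Qm (n + 1) ∧
    Submodule.map Lmap (Qm n) ⊓ Submodule.map mulM1 (Qm n) = ⊥ := by
  exact Stmt19.stmt_19' n
end
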